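/- For the 2×2 real matrix M with entries M₁₁ = 1 + β⁺(2 + β⁺ − β⁻), M₁₂ = β⁻(β⁺ − β⁻), M₂₁ = β⁺(β⁻ − β⁺), M₂₂ = 1 + β⁻(2 + β⁻ − β⁺), where β± = (ω/2)(−1 ± 2d/(m²+2d)) with m > 0, d ≥ 1 and 0 < ω < 2, the (0,0) entry of (I − M)^{-1} equals (β⁺ − β⁻ − 2)/(4β⁺). -/
import Mathlib


/-- For the even/odd update matrix `M` built from
`β± = (ω/2)(−1 ± 2d/(m²+2d))`, the matrix `I - M` is invertible and
`((I - M)⁻¹)_{0,0} = (β⁺ - β⁻ - 2) / (4 β⁺)`. -/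
theorem even_odd_inv_entry (m ω : ℝ) (d : ℕ) (hm : 0 < m) (hd : 1 ≤ d)
    (hω0 : 0 < ω) (hω2 : ω < 2) :
    let βp : ℝ := ω / 2 * (-1 + 2 * d / (m ^ 2 + 2 * d))
    let βm : ℝ := ω / 2 * (-1 - 2 * d / (m ^ 2 + 2 * d))
    let M : Matrix (Fin 2) (Fin 2) ℝ :=
      !![1 + βp * (2 + βp - βm), βm * (βp - βm);
         βp * (βm - βp), 1 + βm * (2 + βm - βp)]
    IsUnit (1 - M).det ∧ (1 - M)⁻¹ 0 0 = (βp - βm - 2) / (4 * βp) := by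
  intro βp βm M
  have hdpos : (0:ℝ) < (d:ℝ) := by exact_mod_cast Nat.lt_of_lt_of_le Nat.zero_lt_one hd
  have hden : (0:ℝ) < m ^ 2 + 2 * d := by positivity
  have hs : 2 * (d:ℝ) / (m ^ 2 + 2 * d) < 1 := by
    rw [div_lt_one hden]; nlinarith
  have hs0 : 0 < 2 * (d:ℝ) / (m ^ 2 + 2 * d) := by positivity
  have hβp : βp < 0 := by
    have : -1 + 2 * (d:ℝ) / (m ^ 2 + 2 * d) < 0 := by linarith
    exact mul_neg_of_pos_of_neg (by linarith) this
  have hβm : βm < 0 := by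
    have : -1 - 2 * (d:ℝ) / (m ^ 2 + 2 * d) < 0 := by linarith
    exact mul_neg_of_pos_of_neg (by linarith) this
  have hdet : (1 - M).det = 4 * βp * βm := by
    have h1 : (1 : Matrix (Fin 2) (Fin 2) ℝ) - M =
        !![-(βp * (2 + βp - βm)), -(βm * (βp - βm));
           -(βp * (βm - βp)), -(βm * (2 + βm - βp))] := by
      show (1 : Matrix (Fin 2) (Fin 2) ℝ) - M = _
      rw [show (1 : Matrix (Fin 2) (Fin 2) ℝ) = !![1,0;0,1] by
        ext i j; fin_cases i <;> fin_cases j <;> simp [Matrix.one_apply]]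
      simp [M]
    rw [h1, Matrix.det_fin_two_of]; ring
  have hdet0 : (1 - M).det ≠ 0 := by
    rw [hdet]
    have := mul_pos (neg_pos.mpr hβp) (neg_pos.mpr hβm)
    nlinarith
  refine ⟨isUnit_iff_ne_zero.mpr hdet0, ?_⟩
  have hinv : (1 - M)⁻¹ 0 0 = (1 - M).det⁻¹ * (1 - M) 1 1 := by
    rw [Matrix.inv_def, Matrix.adjugate_fin_two]
    simp [Ring.inverse_eq_inv]
  rw [hinv, hdet]
  have h11 : (1 - M) 1 1 = -(βm * (2 + βm - βp)) := by
    simp [M, Matrix.one_apply]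
  rw [h11]
  have hp := hβp.ne
  have hq := hβm.ne
  clear_value M
  clear M hdet hdet0 hinv h11
  clear_value βp βm
  field_simp
  ring
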